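/- Vacuum-avoidance from the energy bound: let ρ ∈ H¹(𝕋) with ρ ≥ 0, total mass M₀ = ∫_𝕋 ρ dx, and suppose √ρ ∈ H¹(𝕋) with ∫_𝕋 (∂_x√ρ)² dx ≤ 2E₀ where E₀ ≤ (1/2)(M₀^{1/2} − δ M₀^{−1/2})² for some 0 < δ ≤ M₀. Then inf_{x ∈ 𝕋} ρ(x) ≥ δ. -/

import Mathlib

open Real

private lemma young_aux (t a b : ℝ) (ht : 0 < t) : 2 * a * b ≤ t * a ^ 2 + b ^ 2 / t := by
  have h := sq_nonneg (t * a - b)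
  have expand : t * a ^ 2 + b ^ 2 / t - 2 * a * b = (t * a - b) ^ 2 / t := by
    field_simp
    ring
  linarith [div_nonneg h ht.le]

/-- Vacuum avoidance from the energy bound: if `ρ ≥ 0` is periodic with mass `M₀ = ∫ ρ`,
`√ρ` is `C¹` with `∫ (∂_x√ρ)² ≤ 2E₀` and `E₀ ≤ (1/2)(√M₀ − δ/√M₀)²` for some `0 < δ ≤ M₀`,
then `ρ ≥ δ` everywhere. -/
theorem vacuum_avoidance
    (ρ : ℝ → ℝ) (hper : Function.Periodic ρ 1) (hnonneg : ∀ x, 0 ≤ ρ x)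
    (hs : ContDiff ℝ 1 (fun x => Real.sqrt (ρ x)))
    (M₀ E₀ δ : ℝ) (hM : M₀ = ∫ x in (0:ℝ)..1, ρ x)
    (hδ : 0 < δ) (hδM : δ ≤ M₀)
    (hE : ∫ x in (0:ℝ)..1, (deriv (fun y => Real.sqrt (ρ y)) x) ^ 2 ≤ 2 * E₀)
    (hE0 : E₀ ≤ (1/2) * (Real.sqrt M₀ - δ / Real.sqrt M₀) ^ 2) :
    ∀ x, δ ≤ ρ x := by
  set s : ℝ → ℝ := fun x => Real.sqrt (ρ x) with hsdef
  have hM0pos : 0 < M₀ := lt_of_lt_of_le hδ hδM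
  have hρeq : ∀ x, s x ^ 2 = ρ x := fun x => Real.sq_sqrt (hnonneg x)
  have hρfun : (fun y => s y ^ 2) = ρ := funext hρeq
  have hscont : Continuous s := hs.continuous
  have hsper : Function.Periodic s 1 := fun x => by
    simp only [hsdef]; rw [hper x]
  have hsd : Differentiable ℝ s := hs.differentiable one_ne_zero
  have hs'cont : Continuous (deriv s) := hs.continuous_deriv le_rfl
  have hs'per : Function.Periodic (deriv s) 1 := by
    intro x
    have h1 : (fun y => s (y + 1)) = s := funext hsper
    calc deriv s (x + 1) = deriv (fun y => s (y + 1)) x := (deriv_comp_add_const s 1 x).symm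
    _ = deriv s x := by rw [h1]
  have hρcont : Continuous ρ := hρfun ▸ (hscont.pow 2)
  set d : ℝ → ℝ := fun x => 2 * s x * deriv s x with hddef
  have hdcont : Continuous d := (continuous_const.mul hscont).mul hs'cont
  have hdper : Function.Periodic d 1 := fun x => by
    simp only [hddef, hsper x, hs'per x]
  have habsper : Function.Periodic (fun t => |d t|) 1 := fun x => by
    show |d (x + 1)| = |d x|
    rw [hdper x]
  have hρd : ∀ x, HasDerivAt ρ (d x) x := by
    intro x
    have h1 : HasDerivAt s (deriv s x) x := (hsd x).hasDerivAt
    have h2 := h1.fun_pow 2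
    rw [hρfun] at h2
    refine h2.congr_deriv ?_
    push_cast
    show _ = 2 * s x * deriv s x
    ring
  have ftc : ∀ a b : ℝ, ∫ t in a..b, d t = ρ b - ρ a := fun a b =>
    intervalIntegral.integral_eq_sub_of_hasDerivAt (fun t _ => hρd t)
      (hdcont.intervalIntegrable a b)
  set I : ℝ := ∫ t in (0:ℝ)..1, |d t| with hIdef
  have hIarc : ∀ a : ℝ, ∫ t in a..a+1, |d t| = I := by
    intro a
    have := habsper.intervalIntegral_add_eq a 0
    simpa using this
  -- Key pointwise estimate: ρ y - ρ x ≤ I / 2 for x, y in [0,1]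
  have key : ∀ x ∈ Set.Icc (0:ℝ) 1, ∀ y ∈ Set.Icc (0:ℝ) 1, ρ y - ρ x ≤ I / 2 := by
    intro x hx y hy
    rcases le_total x y with hxy | hxy
    · have hy1 : y ≤ x + 1 := le_trans hy.2 (by linarith [hx.1])
      have hA1 : ρ y - ρ x ≤ ∫ t in x..y, |d t| := by
        rw [← ftc x y]
        exact le_trans (le_abs_self _)
          (intervalIntegral.abs_integral_le_integral_abs hxy)
      have hA2 : ρ y - ρ x ≤ ∫ t in y..x+1, |d t| := by
        have h1 : ρ y - ρ x = -(∫ t in y..x+1, d t) := by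
          rw [ftc y (x+1), hper x]; ring
        rw [h1]
        exact le_trans (neg_le_abs _)
          (intervalIntegral.abs_integral_le_integral_abs hy1)
      have hsum : (∫ t in x..y, |d t|) + (∫ t in y..x+1, |d t|) = I := by
        rw [intervalIntegral.integral_add_adjacent_intervals
          ((hdcont.abs).intervalIntegrable x y) ((hdcont.abs).intervalIntegrable y (x+1))]
        exact hIarc x
      linarith
    · have hx1 : x ≤ y + 1 := le_trans hx.2 (by linarith [hy.1])
      have hA1 : ρ y - ρ x ≤ ∫ t in y..x, |d t| := by
        have h1 : ρ y - ρ x = -(∫ t in y..x, d t) := by rw [ftc y x]; ring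
        rw [h1]
        exact le_trans (neg_le_abs _)
          (intervalIntegral.abs_integral_le_integral_abs hxy)
      have hA2 : ρ y - ρ x ≤ ∫ t in x..y+1, |d t| := by
        have h1 : ρ y - ρ x = ∫ t in x..y+1, d t := by
          rw [ftc x (y+1), hper y]
        rw [h1]
        exact le_trans (le_abs_self _)
          (intervalIntegral.abs_integral_le_integral_abs hx1)
      have hsum : (∫ t in y..x, |d t|) + (∫ t in x..y+1, |d t|) = I := by
        rw [intervalIntegral.integral_add_adjacent_intervals
          ((hdcont.abs).intervalIntegrable y x) ((hdcont.abs).intervalIntegrable x (y+1))]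
        exact hIarc y
      linarith
  -- hence M₀ - ρ x ≤ I/2 on [0,1]
  have keyM : ∀ x ∈ Set.Icc (0:ℝ) 1, M₀ - ρ x ≤ I / 2 := by
    intro x hx
    have h1 : M₀ - ρ x = ∫ y in (0:ℝ)..1, (ρ y - ρ x) := by
      rw [intervalIntegral.integral_sub (hρcont.intervalIntegrable 0 1)
        (intervalIntegrable_const)]
      simp [hM]
    have h2 : (∫ y in (0:ℝ)..1, (ρ y - ρ x)) ≤ ∫ y in (0:ℝ)..1, (I / 2) := by
      apply intervalIntegral.integral_mono_on zero_le_one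
        ((hρcont.sub continuous_const).intervalIntegrable 0 1) intervalIntegrable_const
      intro y hy
      exact key x hx y hy
    rw [h1]
    simpa using h2
  -- the energy bound on I : for every 0 < δ' < δ, I ≤ 2 (M₀ - δ')
  have hsqM : Real.sqrt M₀ * Real.sqrt M₀ = M₀ := Real.mul_self_sqrt hM0pos.le
  have hsqMpos : 0 < Real.sqrt M₀ := Real.sqrt_pos.2 hM0pos
  have hE0' : 2 * E₀ ≤ (M₀ - δ)^2 / M₀ := by
    have h1 : Real.sqrt M₀ - δ / Real.sqrt M₀ = (M₀ - δ) / Real.sqrt M₀ := by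
      have hm : M₀ / Real.sqrt M₀ = Real.sqrt M₀ := by
        rw [div_eq_iff hsqMpos.ne']
        exact hsqM.symm
      rw [sub_div, hm]
    have h2 : (Real.sqrt M₀ - δ / Real.sqrt M₀)^2 = (M₀ - δ)^2 / M₀ := by
      rw [h1, div_pow, Real.sq_sqrt hM0pos.le]
    nlinarith [hE0]
  have hIbound : ∀ δ' : ℝ, 0 < δ' → δ' < δ → I ≤ 2 * (M₀ - δ') := by
    intro δ' hδ'pos hδ'lt
    set t : ℝ := (M₀ - δ') / M₀ with htdef
    have htpos : 0 < t := div_pos (by linarith) hM0pos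
    have hptw : ∀ y ∈ Set.Icc (0:ℝ) 1, |d y| ≤ t * s y ^ 2 + (deriv s y)^2 / t := by
      intro y _
      have h1 : |d y| = 2 * |s y| * |deriv s y| := by
        show |2 * s y * deriv s y| = _
        rw [abs_mul, abs_mul, abs_two]
      have h2 := young_aux t |s y| |deriv s y| htpos
      rw [sq_abs, sq_abs] at h2
      rw [h1]
      exact h2
    have hInt1 : I ≤ ∫ y in (0:ℝ)..1, (t * s y ^ 2 + (deriv s y)^2 / t) := by
      apply intervalIntegral.integral_mono_on zero_le_one
        ((hdcont.abs).intervalIntegrable 0 1)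
        (((continuous_const.mul (hscont.pow 2)).add
          ((hs'cont.pow 2).div_const t)).intervalIntegrable 0 1)
      exact hptw
    have hInt2 : (∫ y in (0:ℝ)..1, (t * s y ^ 2 + (deriv s y)^2 / t))
        = t * M₀ + (∫ y in (0:ℝ)..1, (deriv s y)^2) / t := by
      rw [intervalIntegral.integral_add (f := fun y => t * s y ^ 2) (g := fun y => deriv s y ^ 2 / t)
        ((continuous_const.mul (hscont.pow 2)).intervalIntegrable 0 1)
        (((hs'cont.pow 2).div_const t).intervalIntegrable 0 1),
        intervalIntegral.integral_const_mul, intervalIntegral.integral_div]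
      congr 2
      rw [hM]
      exact intervalIntegral.integral_congr (fun y _ => hρeq y)
    have hfinal : t * M₀ + (∫ y in (0:ℝ)..1, (deriv s y)^2) / t ≤ 2 * (M₀ - δ') := by
      have h5 : (∫ y in (0:ℝ)..1, (deriv s y)^2) / t ≤ (2 * E₀) / t :=
        (div_le_div_iff_of_pos_right htpos).mpr hE
      have h6 : (2 * E₀) / t ≤ M₀ - δ' := by
        rw [div_le_iff₀ htpos]
        have ht' : (M₀ - δ') * t = (M₀ - δ')^2 / M₀ := by rw [htdef]; ring
        rw [ht', le_div_iff₀ hM0pos]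
        have hE0'' : 2 * E₀ * M₀ ≤ (M₀ - δ)^2 := (le_div_iff₀ hM0pos).mp hE0'
        nlinarith [hE0'']
      have h7 : t * M₀ = M₀ - δ' := by rw [htdef]; field_simp
      linarith
    linarith
  -- conclude
  have main : ∀ x ∈ Set.Icc (0:ℝ) 1, δ ≤ ρ x := by
    intro x hx
    apply le_of_forall_sub_le
    intro ε hε
    rcases le_or_gt δ ε with h | h
    · linarith [hnonneg x]
    · have hδ' := hIbound (δ - ε) (by linarith) (by linarith)
      have := keyM x hx
      linarith
  intro x
  have h1 : ρ x = ρ (Int.fract x) := by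
    have := hper.sub_int_mul_eq (x := x) ⌊x⌋
    rw [Int.fract]
    simp at this ⊢
    linarith [this]
  rw [h1]
  exact main _ ⟨Int.fract_nonneg x, (Int.fract_lt_one x).le⟩
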